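/- For all integers m ≥ 4 even, r ≥ 3 odd with (r > 3, or r = 3 and m < 12), and all integers t with 0 < t < m−2: ⌈(m/(m−2−t)) · (r(m−2)/2)⌉ − 2 − t > mr/2 − 1. -/
import Mathlib


/-- Arithmetic inequality from Corollary 3.9: for `m ≥ 4` even, `r ≥ 3` odd with
(`r > 3`, or `r = 3` and `m < 12`), and `0 < t < m - 2`,
`⌈(m/(m-2-t)) · (r(m-2)/2)⌉ - 2 - t > mr/2 - 1`. -/
theorem stmt9 (m r t : ℕ) (hm4 : 4 ≤ m) (hme : Even m) (hr : 3 ≤ r) (hro : Odd r)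
    (hcase : 3 < r ∨ (r = 3 ∧ m < 12)) (ht : 0 < t) (htm : t < m - 2) :
    (⌈(m : ℚ) / ((m : ℚ) - 2 - (t : ℚ)) * ((r : ℚ) * ((m : ℚ) - 2) / 2)⌉ : ℤ) - 2 - t >
      ((m * r / 2 : ℕ) : ℤ) - 1 := by
  obtain ⟨a, rfl⟩ := hme
  have ha : 2 ≤ a := by omega
  have hdiv : (a + a) * r / 2 = a * r := by
    have h2 : (a + a) * r = 2 * (a * r) := by ring
    rw [h2, Nat.mul_div_cancel_left _ (by norm_num)]
  rw [hdiv]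
  have hkey : ((a * r : ℕ) : ℤ) + t + 1 <
      ⌈((a + a : ℕ) : ℚ) / (((a + a : ℕ) : ℚ) - 2 - (t : ℚ)) *
        ((r : ℚ) * (((a + a : ℕ) : ℚ) - 2) / 2)⌉ := by
    rw [Int.lt_ceil]
    have hρ : (0 : ℚ) < ((a + a : ℕ) : ℚ) - 2 - (t : ℚ) := by
      have : (t : ℚ) < (a + a : ℕ) - 2 := by
        push_cast
        have : t + 2 < a + a := by omega
        have := (Nat.cast_lt (α := ℚ)).2 this
        push_cast at this; linarith
      linarith
    rw [div_mul_div_comm, lt_div_iff₀ (by positivity)]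
    -- reduce to polynomial inequality over ℚ
    have haq : (2 : ℚ) ≤ a := by exact_mod_cast ha
    have htq : (1 : ℚ) ≤ t := by exact_mod_cast ht
    have htmq : (t : ℚ) ≤ (a : ℚ) + a - 3 := by
      have : t + 3 ≤ a + a := by omega
      have := (Nat.cast_le (α := ℚ)).2 this
      push_cast at this; linarith
    push_cast
    rcases hcase with h5 | ⟨hr3, hm12⟩
    · have hr5 : 5 ≤ r := by
        rcases hro with ⟨k, rfl⟩; omega
      have hrq : (5 : ℚ) ≤ r := by exact_mod_cast hr5
      nlinarith [mul_nonneg (by linarith : (0:ℚ) ≤ (a:ℚ) + a)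
          (mul_nonneg (by linarith : (0:ℚ) ≤ (t:ℚ) - 1) (by linarith : (0:ℚ) ≤ (r:ℚ) - 5)),
        mul_nonneg (by linarith : (0:ℚ) ≤ (a:ℚ) + a - 4)
          (by linarith : (0:ℚ) ≤ 3*(t:ℚ) + r - 8),
        mul_pos (by linarith : (0:ℚ) < (t:ℚ) + 1) (by linarith : (0:ℚ) < (t:ℚ) + 2)]
    · subst hr3
      have hmq : (a : ℚ) + a ≤ 10 := by
        have : a + a ≤ 10 := by omega
        have := (Nat.cast_le (α := ℚ)).2 this
        push_cast at this; linarith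
      -- difference = (m-2)(t-2) + 2t(t+4)
      push_cast
      rcases le_or_gt 2 t with h2t | h1t
      · have h2tq : (2 : ℚ) ≤ t := by exact_mod_cast h2t
        nlinarith [mul_nonneg (by linarith : (0:ℚ) ≤ (a:ℚ) + a)
          (by linarith : (0:ℚ) ≤ (t:ℚ) - 2),
          mul_pos (by linarith : (0:ℚ) < (t:ℚ) + 1) (by linarith : (0:ℚ) < (t:ℚ) + 2)]
      · have ht1 : t = 1 := by omega
        subst ht1
        push_cast
        nlinarith
  omega
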